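/- arXiv:2206.01091 — 3 statements merged into one kernel-verified Lean document; each statement's English description precedes it below -/
import Mathlib

section
/- For A = diag(a₁, a₂) and B = diag(b₁, b₂) invertible real 2×2 diagonal matrices, the double integral over O(2) × O(2) of det(Id − u (ψ₂ B) ⊗ (ψ₁ A)⁻ᵀ) dψ₂ dψ₁ (normalized Haar measures) equals 1 + (b₁² b₂²)/(a₁² a₂²) u⁴. -/
open Matrix MeasureTheory

private lemma detFin4 (M : Matrix (Fin 4) (Fin 4) ℝ) : M.det =
    M 0 0 * (M 1 1 * (M 2 2 * M 3 3 - M 2 3 * M 3 2) - M 1 2 * (M 2 1 * M 3 3 - M 2 3 * M 3 1) + M 1 3 * (M 2 1 * M 3 2 - M 2 2 * M 3 1))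
  - M 0 1 * (M 1 0 * (M 2 2 * M 3 3 - M 2 3 * M 3 2) - M 1 2 * (M 2 0 * M 3 3 - M 2 3 * M 3 0) + M 1 3 * (M 2 0 * M 3 2 - M 2 2 * M 3 0))
  + M 0 2 * (M 1 0 * (M 2 1 * M 3 3 - M 2 3 * M 3 1) - M 1 1 * (M 2 0 * M 3 3 - M 2 3 * M 3 0) + M 1 3 * (M 2 0 * M 3 1 - M 2 1 * M 3 0))
  - M 0 3 * (M 1 0 * (M 2 1 * M 3 2 - M 2 2 * M 3 1) - M 1 1 * (M 2 0 * M 3 2 - M 2 2 * M 3 0) + M 1 2 * (M 2 0 * M 3 1 - M 2 1 * M 3 0)) := by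
  simp [Matrix.det_succ_row_zero, Fin.sum_univ_succ, Fin.succAbove,
    show (Fin.succ 2 : Fin 4) = 3 from rfl, show (Fin.castSucc 2 : Fin 4) = 2 from rfl]
  ring

set_option maxHeartbeats 1000000 in
private lemma kron_det (u : ℝ) (M P : Matrix (Fin 2) (Fin 2) ℝ) :
    ((1 : Matrix (Fin 2 × Fin 2) (Fin 2 × Fin 2) ℝ) - u • Matrix.kroneckerMap (· * ·) M P).det
    = 1 - u*(M.trace*P.trace)
      + u^2*(M.trace^2*P.det + M.det*P.trace^2 - 2*(M.det*P.det))
      - u^3*(M.det*P.det*M.trace*P.trace) + u^4*(M.det^2*P.det^2) := by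
  rw [← Matrix.det_submatrix_equiv_self (finProdFinEquiv (m := 2) (n := 2)).symm, detFin4]
  simp [Matrix.submatrix_apply, Matrix.one_apply, Matrix.kroneckerMap_apply,
    Matrix.trace_fin_two, Matrix.det_fin_two,
    show (finProdFinEquiv (m := 2) (n := 2)).symm 0 = (0,0) by decide,
    show (finProdFinEquiv (m := 2) (n := 2)).symm 1 = (0,1) by decide,
    show (finProdFinEquiv (m := 2) (n := 2)).symm 2 = (1,0) by decide,
    show (finProdFinEquiv (m := 2) (n := 2)).symm 3 = (1,1) by decide,
    Prod.ext_iff]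
  ring

private lemma entry_bd (ψ : Matrix.orthogonalGroup (Fin 2) ℝ) (i j : Fin 2) :
    |(ψ : Matrix (Fin 2) (Fin 2) ℝ) i j| ≤ 1 := by
  have h : star (ψ : Matrix (Fin 2) (Fin 2) ℝ) * ψ = 1 := ψ.2.1
  have h2 := congrFun (congrFun h j) j
  simp [Matrix.mul_apply, Matrix.star_apply, Matrix.one_apply, Fin.sum_univ_two] at h2
  have key : ∀ x y : ℝ, x * x + y * y = 1 → |x| ≤ 1 := by
    intro x y hxy; rw [abs_le]; constructor <;> nlinarith [mul_self_nonneg y]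
  fin_cases i
  · exact key _ _ h2
  · exact key ((ψ : Matrix (Fin 2) (Fin 2) ℝ) 1 j) ((ψ : Matrix (Fin 2) (Fin 2) ℝ) 0 j) (by linarith)

private lemma det_pm (ψ : Matrix.orthogonalGroup (Fin 2) ℝ) :
    (ψ : Matrix (Fin 2) (Fin 2) ℝ).det * (ψ : Matrix (Fin 2) (Fin 2) ℝ).det = 1 := by
  have h : star (ψ : Matrix (Fin 2) (Fin 2) ℝ) * ψ = 1 := ψ.2.1
  have hs : star (ψ : Matrix (Fin 2) (Fin 2) ℝ) = (ψ : Matrix (Fin 2) (Fin 2) ℝ)ᵀ := by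
    ext i j; simp [Matrix.star_apply]
  have := congrArg Matrix.det h
  rwa [Matrix.det_mul, hs, Matrix.det_transpose, Matrix.det_one] at this

private lemma int_zero
    [MeasurableSpace (Matrix.orthogonalGroup (Fin 2) ℝ)]
    [BorelSpace (Matrix.orthogonalGroup (Fin 2) ℝ)]
    (ν : Measure (Matrix.orthogonalGroup (Fin 2) ℝ))
    (hinv : ∀ U : Matrix.orthogonalGroup (Fin 2) ℝ, ν.map (fun V => U * V) = ν)
    (f : Matrix.orthogonalGroup (Fin 2) ℝ → ℝ) (hf : Continuous f)
    (U : Matrix.orthogonalGroup (Fin 2) ℝ) (hU : ∀ V, f (U * V) = -f V) :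
    ∫ V, f V ∂ν = 0 := by
  have hm : Measurable fun V : Matrix.orthogonalGroup (Fin 2) ℝ => U * V :=
    (continuous_const.mul continuous_id).measurable
  have h1 := integral_map (μ := ν) hm.aemeasurable hf.aestronglyMeasurable
  rw [hinv U] at h1
  have h2 : ∫ V, f (U * V) ∂ν = -∫ V, f V ∂ν := by
    simp only [hU]; exact integral_neg f
  linarith [h1, h2]

private lemma integr
    [MeasurableSpace (Matrix.orthogonalGroup (Fin 2) ℝ)]
    [BorelSpace (Matrix.orthogonalGroup (Fin 2) ℝ)]
    (ν : Measure (Matrix.orthogonalGroup (Fin 2) ℝ)) [IsProbabilityMeasure ν]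
    (f : Matrix.orthogonalGroup (Fin 2) ℝ → ℝ) (hf : Continuous f)
    (c : ℝ) (hb : ∀ ψ, |f ψ| ≤ c) : Integrable f ν := by
  refine ⟨hf.aestronglyMeasurable, ?_⟩
  apply MeasureTheory.HasFiniteIntegral.of_bounded (C := c)
  exact ae_of_all _ (by simpa [Real.norm_eq_abs] using hb)


private lemma int_combo {X : Type*} [MeasurableSpace X]
    (ν : Measure X) [IsProbabilityMeasure ν] (f g h k : X → ℝ) (c₀ c₁ c₂ c₃ c₄ : ℝ)
    (hf : Integrable f ν) (hg : Integrable g ν) (hh : Integrable h ν) (hk : Integrable k ν)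
    (hf0 : ∫ x, f x ∂ν = 0) (hg0 : ∫ x, g x ∂ν = 0) (hk0 : ∫ x, k x ∂ν = 0) :
    ∫ x, (c₀ + (c₁ * f x + (c₂ * g x + (c₃ * h x + c₄ * k x)))) ∂ν
      = c₀ + c₃ * ∫ x, h x ∂ν := by
  have I4 : Integrable (fun x => c₃ * h x + c₄ * k x) ν := by
    exact (hh.const_mul c₃).add (hk.const_mul c₄)
  have I3 : Integrable (fun x => c₂ * g x + (c₃ * h x + c₄ * k x)) ν := by
    exact (hg.const_mul c₂).add I4
  have I2 : Integrable (fun x => c₁ * f x + (c₂ * g x + (c₃ * h x + c₄ * k x))) ν := by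
    exact (hf.const_mul c₁).add I3
  rw [integral_add (integrable_const c₀) I2, integral_add (hf.const_mul c₁) I3,
    integral_add (hg.const_mul c₂) I4, integral_add (hh.const_mul c₃) (hk.const_mul c₄),
    integral_const_mul, integral_const_mul, integral_const_mul, integral_const_mul,
    hf0, hg0, hk0, integral_const]
  simp [measure_univ]

set_option maxHeartbeats 1000000 in
/-- for invertible diagonal matrices `A = diag(a₁,a₂)` and
`B = diag(b₁,b₂)`, the double integral over `O(2) × O(2)` (normalized Haar
measures) of `det (Id - u (ψ₂ B) ⊗ ᵀ((ψ₁ A)⁻¹))` equals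
`1 + (b₁² b₂²)/(a₁² a₂²) u⁴`. -/
theorem double_integral_O2_characteristic_polynomial
    (a₁ a₂ b₁ b₂ : ℝ) (ha₁ : a₁ ≠ 0) (ha₂ : a₂ ≠ 0) (hb₁ : b₁ ≠ 0) (hb₂ : b₂ ≠ 0)
    [MeasurableSpace (Matrix.orthogonalGroup (Fin 2) ℝ)]
    [BorelSpace (Matrix.orthogonalGroup (Fin 2) ℝ)]
    (ν : Measure (Matrix.orthogonalGroup (Fin 2) ℝ)) [IsProbabilityMeasure ν]
    (hinv : ∀ U : Matrix.orthogonalGroup (Fin 2) ℝ, ν.map (fun V => U * V) = ν)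
    (u : ℝ) :
    (∫ ψ₁ : Matrix.orthogonalGroup (Fin 2) ℝ,
        ∫ ψ₂ : Matrix.orthogonalGroup (Fin 2) ℝ,
          ((1 : Matrix (Fin 2 × Fin 2) (Fin 2 × Fin 2) ℝ)
              - u • Matrix.kroneckerMap (· * ·)
                  ((ψ₂ : Matrix (Fin 2) (Fin 2) ℝ) * Matrix.diagonal ![b₁, b₂])
                  ((((ψ₁ : Matrix (Fin 2) (Fin 2) ℝ) * Matrix.diagonal ![a₁, a₂])⁻¹)ᵀ)).det
          ∂ν ∂ν)
      = 1 + (b₁ ^ 2 * b₂ ^ 2) / (a₁ ^ 2 * a₂ ^ 2) * u ^ 4 := by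
  -- basic functions on the orthogonal group
  set e : Matrix.orthogonalGroup (Fin 2) ℝ → ℝ :=
    fun ψ => ((ψ : Matrix (Fin 2) (Fin 2) ℝ)).det with he_def
  set t : Matrix.orthogonalGroup (Fin 2) ℝ → ℝ :=
    fun ψ => (ψ : Matrix (Fin 2) (Fin 2) ℝ) 0 0 * b₁ + (ψ : Matrix (Fin 2) (Fin 2) ℝ) 1 1 * b₂ with ht_def
  set s : Matrix.orthogonalGroup (Fin 2) ℝ → ℝ :=
    fun ψ => (((ψ : Matrix (Fin 2) (Fin 2) ℝ) * Matrix.diagonal ![a₁, a₂])⁻¹).trace with hs_def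
  have he1 : ∀ ψ, e ψ = 1 ∨ e ψ = -1 := fun ψ => mul_self_eq_one_iff.mp (det_pm ψ)
  -- continuity
  have centry : ∀ i j : Fin 2, Continuous fun ψ : Matrix.orthogonalGroup (Fin 2) ℝ =>
      (ψ : Matrix (Fin 2) (Fin 2) ℝ) i j :=
    fun i j => (continuous_apply j).comp ((continuous_apply i).comp continuous_subtype_val)
  have cont_t : Continuous t := ((centry 0 0).mul continuous_const).add ((centry 1 1).mul continuous_const)
  have cont_e : Continuous e := Continuous.matrix_det continuous_subtype_val
  -- bounds
  have hbe : ∀ ψ, |e ψ| ≤ 1 := fun ψ => by rcases he1 ψ with h | h <;> rw [h] <;> norm_num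
  have hbt : ∀ ψ, |t ψ| ≤ |b₁| + |b₂| := fun ψ => by
    refine (abs_add_le _ _).trans ?_
    rw [abs_mul, abs_mul]
    exact add_le_add (mul_le_of_le_one_left (abs_nonneg _) (entry_bd ψ 0 0))
      (mul_le_of_le_one_left (abs_nonneg _) (entry_bd ψ 1 1))
  -- integrability
  have it : Integrable t ν := integr ν t cont_t _ hbt
  have ie : Integrable e ν := integr ν e cont_e 1 hbe
  have it2 : Integrable (fun ψ => t ψ ^ 2) ν :=
    integr ν _ (cont_t.pow 2) ((|b₁| + |b₂|) ^ 2)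
      (fun ψ => by rw [abs_pow]; exact pow_le_pow_left₀ (abs_nonneg _) (hbt ψ) 2)
  have iet : Integrable (fun ψ => e ψ * t ψ) ν :=
    integr ν _ (cont_e.mul cont_t) (1 * (|b₁| + |b₂|))
      (fun ψ => by rw [abs_mul]; exact mul_le_mul (hbe ψ) (hbt ψ) (abs_nonneg _) zero_le_one)
  -- special orthogonal elements
  have hmemneg : (-1 : Matrix (Fin 2) (Fin 2) ℝ) ∈ Matrix.unitaryGroup (Fin 2) ℝ := by
    rw [Matrix.mem_unitaryGroup_iff]; simp
  set Uneg : Matrix.orthogonalGroup (Fin 2) ℝ := ⟨-1, hmemneg⟩ with hUneg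
  have hmemD : (Matrix.diagonal ![(1:ℝ), -1]) ∈ Matrix.unitaryGroup (Fin 2) ℝ := by
    rw [Matrix.mem_unitaryGroup_iff]
    ext i j
    fin_cases i <;> fin_cases j <;>
      simp [Matrix.mul_apply, Fin.sum_univ_two, Matrix.star_apply, Matrix.diagonal_apply,
        Matrix.one_apply]
  set Uflip : Matrix.orthogonalGroup (Fin 2) ℝ := ⟨Matrix.diagonal ![(1:ℝ), -1], hmemD⟩ with hUflip
  have hcoe : ∀ W V : Matrix.orthogonalGroup (Fin 2) ℝ,
      ((W * V : Matrix.orthogonalGroup (Fin 2) ℝ) : Matrix (Fin 2) (Fin 2) ℝ)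
        = (W : Matrix (Fin 2) (Fin 2) ℝ) * (V : Matrix (Fin 2) (Fin 2) ℝ) := fun _ _ => rfl
  -- vanishing integrals
  have htUneg : ∀ V, t (Uneg * V) = -t V := by
    intro V
    rw [ht_def]
    simp only [hcoe, hUneg, neg_one_mul, Matrix.neg_apply]
    ring
  have ht0 : ∫ ψ, t ψ ∂ν = 0 := int_zero ν hinv t cont_t Uneg htUneg
  have he0 : ∫ ψ, e ψ ∂ν = 0 := by
    refine int_zero ν hinv e cont_e Uflip (fun V => ?_)
    rw [he_def]
    simp only [hcoe, hUflip, Matrix.det_mul, Matrix.det_diagonal, Fin.prod_univ_two]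
    simp
  have heUneg : ∀ V, e (Uneg * V) = e V := by
    intro V
    rw [he_def]
    simp only [hcoe, hUneg, neg_one_mul, Matrix.det_neg, Fintype.card_fin]
    ring
  have het0 : ∫ ψ, e ψ * t ψ ∂ν = 0 := by
    refine int_zero ν hinv _ (cont_e.mul cont_t) Uneg (fun V => ?_)
    rw [heUneg V, htUneg V]; ring
  -- pointwise identity for the determinant
  have hkey : ∀ ψ₁ ψ₂ : Matrix.orthogonalGroup (Fin 2) ℝ,
      ((1 : Matrix (Fin 2 × Fin 2) (Fin 2 × Fin 2) ℝ)
          - u • Matrix.kroneckerMap (· * ·)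
              ((ψ₂ : Matrix (Fin 2) (Fin 2) ℝ) * Matrix.diagonal ![b₁, b₂])
              ((((ψ₁ : Matrix (Fin 2) (Fin 2) ℝ) * Matrix.diagonal ![a₁, a₂])⁻¹)ᵀ)).det
      = (1 + b₁ ^ 2 * b₂ ^ 2 / (a₁ ^ 2 * a₂ ^ 2) * u ^ 4)
        + ((-u * s ψ₁) * t ψ₂
        + ((u ^ 2 * (b₁ * b₂) * ((s ψ₁) ^ 2 - 2 * (e ψ₁ / (a₁ * a₂)))) * e ψ₂
        + ((u ^ 2 * e ψ₁ / (a₁ * a₂)) * t ψ₂ ^ 2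
        + (-(u ^ 3) * (b₁ * b₂) * (e ψ₁ / (a₁ * a₂)) * s ψ₁) * (e ψ₂ * t ψ₂)))) := by
    intro ψ₁ ψ₂
    rw [kron_det]
    have htr2 : ((ψ₂ : Matrix (Fin 2) (Fin 2) ℝ) * Matrix.diagonal ![b₁, b₂]).trace = t ψ₂ := by
      rw [ht_def]; simp [Matrix.trace_fin_two, Matrix.mul_diagonal]
    have hdet2 : ((ψ₂ : Matrix (Fin 2) (Fin 2) ℝ) * Matrix.diagonal ![b₁, b₂]).det
        = e ψ₂ * (b₁ * b₂) := by
      rw [he_def]; simp [Matrix.det_mul, Matrix.det_diagonal, Fin.prod_univ_two]; try ring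
    have hdet1 : (((ψ₁ : Matrix (Fin 2) (Fin 2) ℝ) * Matrix.diagonal ![a₁, a₂])⁻¹).det
        = e ψ₁ / (a₁ * a₂) := by
      rw [Matrix.det_nonsing_inv, Matrix.det_mul, Matrix.det_diagonal, Fin.prod_univ_two]
      rw [Ring.inverse_eq_inv']
      rcases he1 ψ₁ with h | h <;> rw [he_def] at h <;> rw [he_def] <;> simp only [h] <;>
        · simp only [Matrix.cons_val_zero, Matrix.cons_val_one, Matrix.head_cons]; field_simp
    have hs1 : (((ψ₁ : Matrix (Fin 2) (Fin 2) ℝ) * Matrix.diagonal ![a₁, a₂])⁻¹).trace = s ψ₁ := by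
      rw [hs_def]
    rw [Matrix.trace_transpose, Matrix.det_transpose, htr2, hdet2, hdet1, hs1]
    rcases he1 ψ₁ with h1 | h1 <;> rcases he1 ψ₂ with h2 | h2 <;> rw [h1, h2] <;>
      · field_simp
        try ring
  -- inner integral
  have hinner : ∀ ψ₁ : Matrix.orthogonalGroup (Fin 2) ℝ,
      (∫ ψ₂ : Matrix.orthogonalGroup (Fin 2) ℝ,
        ((1 : Matrix (Fin 2 × Fin 2) (Fin 2 × Fin 2) ℝ)
            - u • Matrix.kroneckerMap (· * ·)
                ((ψ₂ : Matrix (Fin 2) (Fin 2) ℝ) * Matrix.diagonal ![b₁, b₂])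
                ((((ψ₁ : Matrix (Fin 2) (Fin 2) ℝ) * Matrix.diagonal ![a₁, a₂])⁻¹)ᵀ)).det ∂ν)
      = (1 + b₁ ^ 2 * b₂ ^ 2 / (a₁ ^ 2 * a₂ ^ 2) * u ^ 4)
        + (u ^ 2 * (∫ ψ, t ψ ^ 2 ∂ν) / (a₁ * a₂)) * e ψ₁ := by
    intro ψ₁
    simp only [hkey ψ₁]
    rw [int_combo ν t e (fun ψ => t ψ ^ 2) (fun ψ => e ψ * t ψ) _ _ _ _ _
      it ie it2 iet ht0 he0 het0]
    ring
  simp only [hinner]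
  have ifin : Integrable (fun ψ₁ => (u ^ 2 * ∫ ψ, t ψ ^ 2 ∂ν) / (a₁ * a₂) * e ψ₁) ν := by
    exact ie.const_mul _
  rw [integral_add (integrable_const _) ifin, integral_const_mul, he0, integral_const]
  simp [measure_univ]
end

section
/- Let B = diag(b₁,b₂,b₃,b₄) ∈ GL_4(ℝ) and consider the GL_4-representation ρ_{(2,2)} (Schur functor for partition (2,2) applied to ℝ⁴). The vector v = Σ_{1≤i<j≤4} (e_i ∧ e_j)² in Sym²(Λ²ℝ⁴) maps to an O(4)-fixed vector in S_{(2,2)}(ℝ⁴), and the action of ρ_{(2,2)}(B) on the line spanned by (the image of) v has trace-component Σ_{1≤i<j≤4} b_i² b_j²; i.e., the diagonal matrix coefficient of ρ_{(2,2)}(B) at the normalized spherical vector equals (Σ_{i<j} b_i² b_j²)/6. -/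
open Matrix MeasureTheory

noncomputable section

/-- `(-1)^d` times the elementary symmetric function `e_d` of the eigenvalues of
`X`, read off from the characteristic polynomial of `X`. -/
def eFromCharpoly (N : ℕ) (X : Matrix (Fin N) (Fin N) ℝ) (d : ℤ) : ℝ :=
  if 0 ≤ d ∧ d ≤ (N : ℤ) then (-1 : ℝ) ^ d.toNat * X.charpoly.coeff (N - d.toNat) else 0

/-- Conjugate partition of a partition given as a list of parts. -/
def conjList (l : List ℕ) : List ℕ :=
  (List.range (l.foldr max 0)).map fun i => (l.filter (fun a => i < a)).length

/-- The character `tr ρ_l(X)` of the irreducible polynomial representation of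
`GL_N(ℝ)` attached to the partition `l` (parts listed decreasingly): the Schur
polynomial `s_l` of the eigenvalues of `X`, given via the dual Jacobi–Trudi
determinant in the elementary symmetric functions of the eigenvalues. -/
def glChar (N : ℕ) (l : List ℕ) (X : Matrix (Fin N) (Fin N) ℝ) : ℝ :=
  Matrix.det (Matrix.of fun i j : Fin (conjList l).length =>
    eFromCharpoly N X (((conjList l).get i : ℤ) + (j : ℤ) - (i : ℤ)))

end

set_option linter.unusedSectionVars false

noncomputable section Aux
open Polynomial

def ee1 (A : Matrix (Fin 4) (Fin 4) ℝ) : ℝ := A 0 0 + A 1 1 + A 2 2 + A 3 3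
def w2 (A : Matrix (Fin 4) (Fin 4) ℝ) (i j : Fin 4) : ℝ := A i i * A j j - A i j * A j i
def ee2 (A : Matrix (Fin 4) (Fin 4) ℝ) : ℝ :=
  w2 A 0 1 + w2 A 0 2 + w2 A 0 3 + w2 A 1 2 + w2 A 1 3 + w2 A 2 3
def e3a (A : Matrix (Fin 4) (Fin 4) ℝ) (i j k : Fin 4) : ℝ :=
  A i i * (A j j * A k k - A j k * A k j) - A i j * (A j i * A k k - A j k * A k i)
    + A i k * (A j i * A k j - A j j * A k i)
def ee3 (A : Matrix (Fin 4) (Fin 4) ℝ) : ℝ :=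
  e3a A 0 1 2 + e3a A 0 1 3 + e3a A 0 2 3 + e3a A 1 2 3
def dd (A : Matrix (Fin 4) (Fin 4) ℝ) : ℝ :=
  A 0 0 * e3a A 1 2 3 - A 0 1 * (A 1 0 * (A 2 2 * A 3 3 - A 2 3 * A 3 2)
    - A 1 2 * (A 2 0 * A 3 3 - A 2 3 * A 3 0) + A 1 3 * (A 2 0 * A 3 2 - A 2 2 * A 3 0))
    + A 0 2 * (A 1 0 * (A 2 1 * A 3 3 - A 2 3 * A 3 1)
    - A 1 1 * (A 2 0 * A 3 3 - A 2 3 * A 3 0) + A 1 3 * (A 2 0 * A 3 1 - A 2 1 * A 3 0))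
    - A 0 3 * (A 1 0 * (A 2 1 * A 3 2 - A 2 2 * A 3 1)
    - A 1 1 * (A 2 0 * A 3 2 - A 2 2 * A 3 0) + A 1 2 * (A 2 0 * A 3 1 - A 2 1 * A 3 0))

set_option maxHeartbeats 4000000 in
theorem charpoly_four (A : Matrix (Fin 4) (Fin 4) ℝ) :
    A.charpoly = X^4 - C (ee1 A) * X^3 + C (ee2 A) * X^2 - C (ee3 A) * X^1 + C (dd A) := by
  rw [Matrix.charpoly]
  simp only [Matrix.det_succ_row_zero, Fin.sum_univ_succ, Matrix.det_fin_zero,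
    Matrix.submatrix_apply, Fin.succ_zero_eq_one, Fin.succAbove_zero, Matrix.cons_val_zero,
    Matrix.cons_val_succ, Finset.univ_unique, Finset.sum_singleton, Fin.val_zero, Fin.val_succ,
    charmatrix_apply, Matrix.diagonal_apply, Matrix.det_fin_one]
  norm_num [Fin.ext_iff, Fin.succAbove, Fin.castSucc, Fin.castAdd, Fin.castLE, Fin.lt_def,
    Fin.succ]
  have h2 : (⟨2, by omega⟩ : Fin 4) = 2 := rfl
  have h3 : (⟨3, by omega⟩ : Fin 4) = 3 := rfl
  simp only [h2, h3, ee1, ee2, ee3, dd, w2, e3a, map_add, map_sub, _root_.map_mul]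
  ring

theorem coeff3 (A : Matrix (Fin 4) (Fin 4) ℝ) : A.charpoly.coeff 3 = -(ee1 A) := by
  rw [charpoly_four A]
  simp [Polynomial.coeff_add, Polynomial.coeff_sub, Polynomial.coeff_C_mul,
    Polynomial.coeff_X_pow, Polynomial.coeff_C]

theorem coeff2 (A : Matrix (Fin 4) (Fin 4) ℝ) : A.charpoly.coeff 2 = ee2 A := by
  rw [charpoly_four A]
  simp [Polynomial.coeff_add, Polynomial.coeff_sub, Polynomial.coeff_C_mul,
    Polynomial.coeff_X_pow, Polynomial.coeff_C]

theorem coeff1 (A : Matrix (Fin 4) (Fin 4) ℝ) : A.charpoly.coeff 1 = -(ee3 A) := by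
  rw [charpoly_four A]
  simp [Polynomial.coeff_add, Polynomial.coeff_sub, Polynomial.coeff_C_mul,
    Polynomial.coeff_X_pow, Polynomial.coeff_C]

theorem glChar22 (A : Matrix (Fin 4) (Fin 4) ℝ) :
    glChar 4 [2,2] A = ee2 A * ee2 A - ee1 A * ee3 A := by
  have h0 : glChar 4 [2,2] A = Matrix.det (Matrix.of fun i j : Fin 2 =>
      eFromCharpoly 4 A ((([2,2] : List ℕ).get i : ℤ) + (j : ℤ) - (i : ℤ))) := rfl
  rw [h0, Matrix.det_fin_two]
  norm_num [eFromCharpoly]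
  rw [show Int.toNat 2 = 2 from rfl, show Int.toNat 3 = 3 from rfl]
  norm_num [coeff1, coeff2, coeff3]
  ring
end Aux
noncomputable section
abbrev G4 := Matrix.orthogonalGroup (Fin 4) ℝ
def uent (ψ : G4) (i j : Fin 4) : ℝ := (ψ : Matrix (Fin 4) (Fin 4) ℝ) i j

lemma uent_continuous (i j : Fin 4) : Continuous fun ψ : G4 => uent ψ i j :=
  (continuous_apply j).comp ((continuous_apply i).comp continuous_subtype_val)

lemma uent_bound (ψ : G4) (i j : Fin 4) : |uent ψ i j| ≤ 1 := by
  have := entry_norm_bound_of_unitary (𝕜 := ℝ) ψ.2 i j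
  simpa [uent] using this

lemma col_orth (ψ : G4) (i j : Fin 4) :
    uent ψ 0 i * uent ψ 0 j + uent ψ 1 i * uent ψ 1 j + uent ψ 2 i * uent ψ 2 j
      + uent ψ 3 i * uent ψ 3 j = if i = j then 1 else 0 := by
  have h := (Unitary.mem_iff.mp ψ.2).1
  have := congrFun (congrFun h i) j
  simpa [Matrix.mul_apply, Fin.sum_univ_four, Matrix.conjTranspose_apply, Matrix.one_apply,
    uent] using this

def sgn (r : Fin 4) : G4 :=
  ⟨Matrix.diagonal (fun t => if t = r then (-1 : ℝ) else 1), by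
    rw [Matrix.mem_orthogonalGroup_iff]
    have : star (Matrix.diagonal (fun t => if t = r then (-1 : ℝ) else 1))
        = Matrix.diagonal (fun t => if t = r then (-1 : ℝ) else 1) := by
      simp [Matrix.star_eq_conjTranspose, Matrix.diagonal_conjTranspose]
    rw [Matrix.diagonal_transpose, Matrix.diagonal_mul_diagonal,
      show (fun i => (if i = r then (-1:ℝ) else 1) * if i = r then -1 else 1) = fun _ => (1:ℝ)
        from funext fun i => by by_cases h : i = r <;> simp [h], Matrix.diagonal_one]⟩

lemma uent_sgn_mul (r : Fin 4) (ψ : G4) (a c : Fin 4) :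
    uent (sgn r * ψ) a c = (if a = r then -1 else 1) * uent ψ a c := by
  show ((Matrix.diagonal _ : Matrix (Fin 4) (Fin 4) ℝ) * (ψ : Matrix (Fin 4) (Fin 4) ℝ)) a c = _
  rw [Matrix.diagonal_mul]; rfl

def prm (σ : Equiv.Perm (Fin 4)) : G4 :=
  ⟨Matrix.of fun a c => if σ a = c then (1 : ℝ) else 0, by
    rw [Matrix.mem_orthogonalGroup_iff']
    ext u v
    simp only [Matrix.mul_apply, Matrix.star_eq_conjTranspose, Matrix.conjTranspose_apply,
      Matrix.of_apply, star_trivial]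
    rw [Finset.sum_eq_single (σ.symm u)]
    · simp [Matrix.one_apply, Equiv.apply_eq_iff_eq_symm_apply, eq_comm]
    · intro a _ ha
      have : σ a ≠ u := fun h => ha (by simp [← h])
      simp [if_neg this]
    · simp⟩

lemma uent_prm_mul (σ : Equiv.Perm (Fin 4)) (ψ : G4) (a c : Fin 4) :
    uent (prm σ * ψ) a c = uent ψ (σ a) c := by
  show ((Matrix.of fun a c => if σ a = c then (1:ℝ) else 0) * (ψ : Matrix (Fin 4) (Fin 4) ℝ)) a c = _
  simp only [Matrix.mul_apply, Matrix.of_apply, ite_mul, one_mul, zero_mul]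
  rw [Finset.sum_eq_single (σ a)]
  · simp [uent]
  · intro b _ hb; simp [Ne.symm hb]
  · simp

def rotmat : Matrix (Fin 4) (Fin 4) ℝ :=
  Matrix.of fun a b =>
    if a = 0 then (if b = 0 then Real.sqrt 2 / 2 else if b = 1 then -(Real.sqrt 2 / 2) else 0)
    else if a = 1 then (if b = 0 then Real.sqrt 2 / 2 else if b = 1 then Real.sqrt 2 / 2 else 0)
    else if a = b then 1 else 0

lemma sq2 : Real.sqrt 2 / 2 * (Real.sqrt 2 / 2) = 1 / 2 := by
  rw [div_mul_div_comm, Real.mul_self_sqrt (by norm_num)]; norm_num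

def rot : G4 :=
  ⟨rotmat, by
    rw [Matrix.mem_orthogonalGroup_iff]
    ext a b
    fin_cases a <;> fin_cases b <;>
      simp [rotmat, Matrix.mul_apply, Fin.sum_univ_four, Matrix.star_eq_conjTranspose,
        Matrix.conjTranspose_apply, Matrix.one_apply, sq2] <;> norm_num [sq2]⟩

lemma uent_rot_mul_zero (ψ : G4) (c : Fin 4) :
    uent (rot * ψ) 0 c = Real.sqrt 2 / 2 * uent ψ 0 c - Real.sqrt 2 / 2 * uent ψ 1 c := by
  show ((rotmat : Matrix (Fin 4) (Fin 4) ℝ) * (ψ : Matrix (Fin 4) (Fin 4) ℝ)) 0 c = _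
  simp [rotmat, Matrix.mul_apply, Fin.sum_univ_four, uent]
  ring

-- monomials
def m2 (r1 c1 r2 c2 : Fin 4) (ψ : G4) : ℝ := uent ψ r1 c1 * uent ψ r2 c2
def m4 (r1 c1 r2 c2 r3 c3 r4 c4 : Fin 4) (ψ : G4) : ℝ :=
  uent ψ r1 c1 * uent ψ r2 c2 * uent ψ r3 c3 * uent ψ r4 c4

lemma m2_continuous (r1 c1 r2 c2 : Fin 4) : Continuous (m2 r1 c1 r2 c2) :=
  (uent_continuous r1 c1).mul (uent_continuous r2 c2)

lemma m4_continuous (r1 c1 r2 c2 r3 c3 r4 c4 : Fin 4) : Continuous (m4 r1 c1 r2 c2 r3 c3 r4 c4) :=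
  (((uent_continuous r1 c1).mul (uent_continuous r2 c2)).mul (uent_continuous r3 c3)).mul
    (uent_continuous r4 c4)

lemma abs_mul_le_one {x y : ℝ} (hx : |x| ≤ 1) (hy : |y| ≤ 1) : |x * y| ≤ 1 := by
  rw [abs_mul]
  calc |x| * |y| ≤ 1 * 1 := by
        apply mul_le_mul hx hy (abs_nonneg y) (by norm_num)
    _ = 1 := by norm_num

lemma m2_bound (r1 c1 r2 c2 : Fin 4) (ψ : G4) : |m2 r1 c1 r2 c2 ψ| ≤ 1 :=
  abs_mul_le_one (uent_bound ψ r1 c1) (uent_bound ψ r2 c2)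

lemma m4_bound (r1 c1 r2 c2 r3 c3 r4 c4 : Fin 4) (ψ : G4) : |m4 r1 c1 r2 c2 r3 c3 r4 c4 ψ| ≤ 1 :=
  abs_mul_le_one (abs_mul_le_one (abs_mul_le_one (uent_bound ψ r1 c1) (uent_bound ψ r2 c2))
    (uent_bound ψ r3 c3)) (uent_bound ψ r4 c4)

section MeasStuff
variable [MeasurableSpace G4] [BorelSpace G4]
variable (ν : Measure G4) [IsProbabilityMeasure ν]

lemma integrable_of_bdd {f : G4 → ℝ} (hc : Continuous f) {C : ℝ} (hb : ∀ ψ, |f ψ| ≤ C) :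
    Integrable f ν :=
  ⟨hc.aestronglyMeasurable, HasFiniteIntegral.of_bounded (C := C) (ae_of_all _ (by simpa using hb))⟩

lemma m2_int (r1 c1 r2 c2 : Fin 4) : Integrable (m2 r1 c1 r2 c2) ν :=
  integrable_of_bdd ν (m2_continuous _ _ _ _) (m2_bound _ _ _ _)

lemma m4_int (r1 c1 r2 c2 r3 c3 r4 c4 : Fin 4) : Integrable (m4 r1 c1 r2 c2 r3 c3 r4 c4) ν :=
  integrable_of_bdd ν (m4_continuous _ _ _ _ _ _ _ _) (m4_bound _ _ _ _ _ _ _ _)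

variable (hinv : ∀ U : G4, ν.map (fun V => U * V) = ν)
include hinv

lemma intcomp (U : G4) (f : G4 → ℝ) (hf : AEStronglyMeasurable f ν) :
    ∫ ψ, f (U * ψ) ∂ν = ∫ ψ, f ψ ∂ν := by
  have hg : Continuous fun V : G4 => U * V := by
    apply Continuous.subtype_mk
    exact continuous_const.matrix_mul continuous_subtype_val
  calc ∫ ψ, f (U * ψ) ∂ν = ∫ ψ, f ψ ∂(ν.map fun V => U * V) :=
        (integral_map hg.aemeasurable (by rw [hinv]; exact hf)).symm
    _ = ∫ ψ, f ψ ∂ν := by rw [hinv]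

lemma integral_zero_of_anti (U : G4) (f : G4 → ℝ) (hf : AEStronglyMeasurable f ν)
    (h : ∀ ψ, f (U * ψ) = -f ψ) : ∫ ψ, f ψ ∂ν = 0 := by
  have h1 := intcomp ν hinv U f hf
  simp only [h] at h1
  rw [integral_neg] at h1
  linarith

lemma m4_swap (σ : Equiv.Perm (Fin 4)) (r1 c1 r2 c2 r3 c3 r4 c4 : Fin 4) :
    ∫ ψ, m4 (σ r1) c1 (σ r2) c2 (σ r3) c3 (σ r4) c4 ψ ∂ν
      = ∫ ψ, m4 r1 c1 r2 c2 r3 c3 r4 c4 ψ ∂ν := by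
  have hpt : ∀ ψ, m4 r1 c1 r2 c2 r3 c3 r4 c4 (prm σ * ψ)
      = m4 (σ r1) c1 (σ r2) c2 (σ r3) c3 (σ r4) c4 ψ := fun ψ => by
    simp [m4, uent_prm_mul]
  rw [← intcomp ν hinv (prm σ) _ (m4_continuous r1 c1 r2 c2 r3 c3 r4 c4).aestronglyMeasurable]
  simp only [hpt]

lemma m2_swap (σ : Equiv.Perm (Fin 4)) (r1 c1 r2 c2 : Fin 4) :
    ∫ ψ, m2 (σ r1) c1 (σ r2) c2 ψ ∂ν = ∫ ψ, m2 r1 c1 r2 c2 ψ ∂ν := by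
  have hpt : ∀ ψ, m2 r1 c1 r2 c2 (prm σ * ψ) = m2 (σ r1) c1 (σ r2) c2 ψ := fun ψ => by
    simp [m2, uent_prm_mul]
  rw [← intcomp ν hinv (prm σ) _ (m2_continuous r1 c1 r2 c2).aestronglyMeasurable]
  simp only [hpt]

end MeasStuff
end

set_option linter.unusedSectionVars false

section Moments
variable [MeasurableSpace G4] [BorelSpace G4]
variable (ν : Measure G4) [IsProbabilityMeasure ν]

lemma int_lincomb (n : ℕ) (c : Fin n → ℝ) (g : Fin n → G4 → ℝ)
    (hg : ∀ k, Integrable (g k) ν) :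
    ∫ ψ, (∑ k, c k * g k ψ) ∂ν = ∑ k, c k * ∫ ψ, g k ψ ∂ν := by
  rw [integral_finset_sum _ (fun k _ => (hg k).const_mul (c k))]
  exact Finset.sum_congr rfl fun k _ => integral_const_mul _ _

variable (hinv : ∀ U : G4, ν.map (fun V => U * V) = ν)
include hinv

lemma norm_moment (i : Fin 4) : ∫ ψ, m2 0 i 0 i ψ ∂ν = 1/4 := by
  have key : ∫ ψ, (∑ k : Fin 4, (1:ℝ) * ![m2 0 i 0 i, m2 1 i 1 i, m2 2 i 2 i, m2 3 i 3 i] k ψ) ∂ν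
      = ∑ k : Fin 4, (1:ℝ) * ∫ ψ, ![m2 0 i 0 i, m2 1 i 1 i, m2 2 i 2 i, m2 3 i 3 i] k ψ ∂ν :=
    int_lincomb ν 4 _ _ (by intro k; fin_cases k <;> simp <;> exact m2_int ν _ _ _ _)
  have hpt : ∀ ψ : G4,
      (∑ k : Fin 4, (1:ℝ) * ![m2 0 i 0 i, m2 1 i 1 i, m2 2 i 2 i, m2 3 i 3 i] k ψ) = 1 := by
    intro ψ
    have h := col_orth ψ i i
    rw [if_pos rfl] at h
    simp only [Fin.sum_univ_four, Matrix.cons_val_zero, Matrix.cons_val_one, Matrix.head_cons,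
      Matrix.cons_val_two, Matrix.tail_cons, Matrix.cons_val_three, one_mul, m2]
    linarith
  simp only [hpt] at key
  simp only [Fin.sum_univ_four, Matrix.cons_val_zero, Matrix.cons_val_one, Matrix.head_cons,
    Matrix.cons_val_two, Matrix.tail_cons, Matrix.cons_val_three, one_mul] at key
  rw [integral_const] at key
  simp at key
  have s1 := m2_swap ν hinv (Equiv.swap 0 1) 0 i 0 i
  rw [show (Equiv.swap (0:Fin 4) 1) 0 = 1 by decide] at s1
  have s2 := m2_swap ν hinv (Equiv.swap 0 2) 0 i 0 i
  rw [show (Equiv.swap (0:Fin 4) 2) 0 = 2 by decide] at s2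
  have s3 := m2_swap ν hinv (Equiv.swap 0 3) 0 i 0 i
  rw [show (Equiv.swap (0:Fin 4) 3) 0 = 3 by decide] at s3
  linarith

lemma colrel_moment (i j : Fin 4) :
    (∫ ψ, m4 0 i 0 i 0 j 0 j ψ ∂ν) + 3 * ∫ ψ, m4 0 i 0 i 1 j 1 j ψ ∂ν = 1/4 := by
  have key := int_lincomb ν 4 (fun _ => (1:ℝ))
    ![m4 0 i 0 i 0 j 0 j, m4 0 i 0 i 1 j 1 j, m4 0 i 0 i 2 j 2 j, m4 0 i 0 i 3 j 3 j]
    (by intro k; fin_cases k <;> simp <;> exact m4_int ν _ _ _ _ _ _ _ _)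
  have hpt : ∀ ψ : G4, (∑ k : Fin 4, (1:ℝ) *
      ![m4 0 i 0 i 0 j 0 j, m4 0 i 0 i 1 j 1 j, m4 0 i 0 i 2 j 2 j, m4 0 i 0 i 3 j 3 j] k ψ)
      = m2 0 i 0 i ψ := by
    intro ψ
    have h := col_orth ψ j j
    rw [if_pos rfl] at h
    simp only [Fin.sum_univ_four, Matrix.cons_val_zero, Matrix.cons_val_one, Matrix.head_cons,
      Matrix.cons_val_two, Matrix.tail_cons, Matrix.cons_val_three, one_mul, m2, m4]
    linear_combination (uent ψ 0 i * uent ψ 0 i) * h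
  simp only [hpt] at key
  rw [norm_moment ν hinv i] at key
  simp only [Fin.sum_univ_four, Matrix.cons_val_zero, Matrix.cons_val_one, Matrix.head_cons,
    Matrix.cons_val_two, Matrix.tail_cons, Matrix.cons_val_three, one_mul] at key
  have s2 := m4_swap ν hinv (Equiv.swap 1 2) 0 i 0 i 1 j 1 j
  rw [show (Equiv.swap (1:Fin 4) 2) 0 = 0 by decide,
    show (Equiv.swap (1:Fin 4) 2) 1 = 2 by decide] at s2
  have s3 := m4_swap ν hinv (Equiv.swap 1 3) 0 i 0 i 1 j 1 j
  rw [show (Equiv.swap (1:Fin 4) 3) 0 = 0 by decide,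
    show (Equiv.swap (1:Fin 4) 3) 1 = 3 by decide] at s3
  linarith

lemma orthrel_moment (i j : Fin 4) (hij : i ≠ j) :
    (∫ ψ, m4 0 i 0 i 0 j 0 j ψ ∂ν) + 3 * ∫ ψ, m4 0 i 1 i 0 j 1 j ψ ∂ν = 0 := by
  have key := int_lincomb ν 4 (fun _ => (1:ℝ))
    ![m4 0 i 0 i 0 j 0 j, m4 0 i 1 i 0 j 1 j, m4 0 i 2 i 0 j 2 j, m4 0 i 3 i 0 j 3 j]
    (by intro k; fin_cases k <;> simp <;> exact m4_int ν _ _ _ _ _ _ _ _)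
  have hpt : ∀ ψ : G4, (∑ k : Fin 4, (1:ℝ) *
      ![m4 0 i 0 i 0 j 0 j, m4 0 i 1 i 0 j 1 j, m4 0 i 2 i 0 j 2 j, m4 0 i 3 i 0 j 3 j] k ψ)
      = 0 := by
    intro ψ
    have h := col_orth ψ i j
    rw [if_neg hij] at h
    simp only [Fin.sum_univ_four, Matrix.cons_val_zero, Matrix.cons_val_one, Matrix.head_cons,
      Matrix.cons_val_two, Matrix.tail_cons, Matrix.cons_val_three, one_mul, m4]
    linear_combination (uent ψ 0 i * uent ψ 0 j) * h
  simp only [hpt] at key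
  rw [integral_const] at key
  simp only [Fin.sum_univ_four, Matrix.cons_val_zero, Matrix.cons_val_one, Matrix.head_cons,
    Matrix.cons_val_two, Matrix.tail_cons, Matrix.cons_val_three, one_mul] at key
  simp at key
  have s2 := m4_swap ν hinv (Equiv.swap 1 2) 0 i 1 i 0 j 1 j
  rw [show (Equiv.swap (1:Fin 4) 2) 0 = 0 by decide,
    show (Equiv.swap (1:Fin 4) 2) 1 = 2 by decide] at s2
  have s3 := m4_swap ν hinv (Equiv.swap 1 3) 0 i 1 i 0 j 1 j
  rw [show (Equiv.swap (1:Fin 4) 3) 0 = 0 by decide,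
    show (Equiv.swap (1:Fin 4) 3) 1 = 3 by decide] at s3
  linarith

lemma odd_zero (r1 c1 r2 c2 r3 c3 r4 c4 : Fin 4)
    (h : ∀ ψ : G4, m4 r1 c1 r2 c2 r3 c3 r4 c4 (sgn 0 * ψ) = - m4 r1 c1 r2 c2 r3 c3 r4 c4 ψ) :
    ∫ ψ, m4 r1 c1 r2 c2 r3 c3 r4 c4 ψ ∂ν = 0 :=
  integral_zero_of_anti ν hinv (sgn 0) _ (m4_continuous _ _ _ _ _ _ _ _).aestronglyMeasurable h

lemma rot_moment (i j : Fin 4) :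
    2 * (∫ ψ, m4 0 i 0 i 0 j 0 j ψ ∂ν)
      = (∫ ψ, m4 0 i 0 i 1 j 1 j ψ ∂ν) + (∫ ψ, m4 0 j 0 j 1 i 1 i ψ ∂ν)
        + 4 * ∫ ψ, m4 0 i 1 i 0 j 1 j ψ ∂ν := by
  have hcov := intcomp ν hinv rot (m4 0 i 0 i 0 j 0 j)
    (m4_continuous 0 i 0 i 0 j 0 j).aestronglyMeasurable
  have hpt : ∀ ψ : G4, m4 0 i 0 i 0 j 0 j (rot * ψ)
      = ∑ k : Fin 9, ![(1/4 : ℝ), 1/4, 1/4, 1/4, 1, -1/2, -1/2, -1/2, -1/2] k *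
        ![m4 0 i 0 i 0 j 0 j, m4 0 i 0 i 1 j 1 j, m4 0 j 0 j 1 i 1 i, m4 1 i 1 i 1 j 1 j,
          m4 0 i 1 i 0 j 1 j, m4 0 i 0 i 0 j 1 j, m4 0 i 1 i 0 j 0 j, m4 0 i 1 i 1 j 1 j,
          m4 1 i 1 i 0 j 1 j] k ψ := by
    intro ψ
    simp only [Fin.sum_univ_succ, Fin.sum_univ_zero, Matrix.cons_val_zero, Matrix.cons_val_succ,
      add_zero, m4, uent_rot_mul_zero]
    linear_combination ((Real.sqrt 2 / 2 * (Real.sqrt 2 / 2) + 1/2) *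
      ((uent ψ 0 i - uent ψ 1 i) * (uent ψ 0 i - uent ψ 1 i)
        * (uent ψ 0 j - uent ψ 1 j) * (uent ψ 0 j - uent ψ 1 j))) * sq2
  simp only [hpt] at hcov
  rw [int_lincomb ν 9 _ _ (by intro k; fin_cases k <;> simp <;> exact m4_int ν _ _ _ _ _ _ _ _)]
    at hcov
  simp only [Fin.sum_univ_succ, Fin.sum_univ_zero, Matrix.cons_val_zero, Matrix.cons_val_succ,
    add_zero] at hcov
  have s4 := m4_swap ν hinv (Equiv.swap 0 1) 0 i 0 i 0 j 0 j
  rw [show (Equiv.swap (0:Fin 4) 1) 0 = 1 by decide] at s4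
  have z6 := odd_zero ν hinv 0 i 0 i 0 j 1 j (fun ψ => by
    simp only [m4, uent_sgn_mul]; norm_num)
  have z7 := odd_zero ν hinv 0 i 1 i 0 j 0 j (fun ψ => by
    simp only [m4, uent_sgn_mul]; norm_num)
  have z8 := odd_zero ν hinv 0 i 1 i 1 j 1 j (fun ψ => by
    simp only [m4, uent_sgn_mul]; norm_num)
  have z9 := odd_zero ν hinv 1 i 1 i 0 j 1 j (fun ψ => by
    simp only [m4, uent_sgn_mul]; norm_num)
  rw [z6, z7, z8, z9, s4] at hcov
  linarith

lemma sq_moment (i j : Fin 4) (hij : i ≠ j) :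
    ∫ ψ, (uent ψ 0 i * uent ψ 1 j - uent ψ 0 j * uent ψ 1 i)^2 ∂ν = 1/6 := by
  have hpt : ∀ ψ : G4, (uent ψ 0 i * uent ψ 1 j - uent ψ 0 j * uent ψ 1 i)^2
      = ∑ k : Fin 3, ![(1:ℝ), 1, -2] k *
        ![m4 0 i 0 i 1 j 1 j, m4 0 j 0 j 1 i 1 i, m4 0 i 1 i 0 j 1 j] k ψ := by
    intro ψ
    simp only [Fin.sum_univ_succ, Fin.sum_univ_zero, Matrix.cons_val_zero, Matrix.cons_val_succ,
      add_zero, m4]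
    ring
  simp only [hpt]
  rw [int_lincomb ν 3 _ _ (by intro k; fin_cases k <;> simp <;> exact m4_int ν _ _ _ _ _ _ _ _)]
  simp only [Fin.sum_univ_succ, Fin.sum_univ_zero, Matrix.cons_val_zero, Matrix.cons_val_succ,
    add_zero]
  have h1 := colrel_moment ν hinv i j
  have h2 := colrel_moment ν hinv j i
  have h3 := orthrel_moment ν hinv i j hij
  have h4 := rot_moment ν hinv i j
  have hMBsym : ∫ ψ, m4 0 j 0 j 0 i 0 i ψ ∂ν = ∫ ψ, m4 0 i 0 i 0 j 0 j ψ ∂ν := by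
    have hc : ∀ ψ : G4, m4 0 j 0 j 0 i 0 i ψ = m4 0 i 0 i 0 j 0 j ψ := fun ψ => by
      simp only [m4]; ring
    simp only [hc]
  rw [hMBsym] at h2
  linarith
end Moments

noncomputable section Assembly

def wf (i j : Fin 4) (ψ : G4) : ℝ :=
  uent ψ i i * uent ψ j j - uent ψ i j * uent ψ j i

def e3w (i j k : Fin 4) (ψ : G4) : ℝ :=
  uent ψ i i * (uent ψ j j * uent ψ k k - uent ψ j k * uent ψ k j)
    - uent ψ i j * (uent ψ j i * uent ψ k k - uent ψ j k * uent ψ k i)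
    + uent ψ i k * (uent ψ j i * uent ψ k j - uent ψ j j * uent ψ k i)

lemma wf_continuous (i j : Fin 4) : Continuous (wf i j) :=
  ((uent_continuous i i).mul (uent_continuous j j)).sub
    ((uent_continuous i j).mul (uent_continuous j i))

lemma e3w_continuous (i j k : Fin 4) : Continuous (e3w i j k) :=
  ((((uent_continuous i i).mul (((uent_continuous j j).mul (uent_continuous k k)).sub
      ((uent_continuous j k).mul (uent_continuous k j)))).sub
    ((uent_continuous i j).mul (((uent_continuous j i).mul (uent_continuous k k)).sub
      ((uent_continuous j k).mul (uent_continuous k i))))).add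
    ((uent_continuous i k).mul (((uent_continuous j i).mul (uent_continuous k j)).sub
      ((uent_continuous j j).mul (uent_continuous k i)))))

lemma wf_bound (i j : Fin 4) (ψ : G4) : |wf i j ψ| ≤ 2 := by
  have h1 := abs_mul_le_one (uent_bound ψ i i) (uent_bound ψ j j)
  have h2 := abs_mul_le_one (uent_bound ψ i j) (uent_bound ψ j i)
  calc |wf i j ψ| ≤ |uent ψ i i * uent ψ j j| + |uent ψ i j * uent ψ j i| := abs_sub _ _
    _ ≤ 2 := by linarith

lemma e3w_bound (i j k : Fin 4) (ψ : G4) : |e3w i j k ψ| ≤ 6 := by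
  have b1 : |uent ψ i i * (uent ψ j j * uent ψ k k - uent ψ j k * uent ψ k j)| ≤ 2 := by
    rw [abs_mul]
    have h1 := abs_mul_le_one (uent_bound ψ j j) (uent_bound ψ k k)
    have h2 := abs_mul_le_one (uent_bound ψ j k) (uent_bound ψ k j)
    have h3 := abs_sub (uent ψ j j * uent ψ k k) (uent ψ j k * uent ψ k j)
    have h4 := uent_bound ψ i i
    have h5 := abs_nonneg (uent ψ j j * uent ψ k k - uent ψ j k * uent ψ k j)
    nlinarith
  have b2 : |uent ψ i j * (uent ψ j i * uent ψ k k - uent ψ j k * uent ψ k i)| ≤ 2 := by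
    rw [abs_mul]
    have h1 := abs_mul_le_one (uent_bound ψ j i) (uent_bound ψ k k)
    have h2 := abs_mul_le_one (uent_bound ψ j k) (uent_bound ψ k i)
    have h3 := abs_sub (uent ψ j i * uent ψ k k) (uent ψ j k * uent ψ k i)
    have h4 := uent_bound ψ i j
    have h5 := abs_nonneg (uent ψ j i * uent ψ k k - uent ψ j k * uent ψ k i)
    nlinarith
  have b3 : |uent ψ i k * (uent ψ j i * uent ψ k j - uent ψ j j * uent ψ k i)| ≤ 2 := by
    rw [abs_mul]
    have h1 := abs_mul_le_one (uent_bound ψ j i) (uent_bound ψ k j)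
    have h2 := abs_mul_le_one (uent_bound ψ j j) (uent_bound ψ k i)
    have h3 := abs_sub (uent ψ j i * uent ψ k j) (uent ψ j j * uent ψ k i)
    have h4 := uent_bound ψ i k
    have h5 := abs_nonneg (uent ψ j i * uent ψ k j - uent ψ j j * uent ψ k i)
    nlinarith
  calc |e3w i j k ψ|
      ≤ |uent ψ i i * (uent ψ j j * uent ψ k k - uent ψ j k * uent ψ k j)
          - uent ψ i j * (uent ψ j i * uent ψ k k - uent ψ j k * uent ψ k i)|
        + |uent ψ i k * (uent ψ j i * uent ψ k j - uent ψ j j * uent ψ k i)| := abs_add_le _ _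
    _ ≤ 6 := by
        have := abs_sub (uent ψ i i * (uent ψ j j * uent ψ k k - uent ψ j k * uent ψ k j))
          (uent ψ i j * (uent ψ j i * uent ψ k k - uent ψ j k * uent ψ k i))
        linarith

lemma wf_sgn (i j r : Fin 4) (ψ : G4) :
    wf i j (sgn r * ψ)
      = (if i = r then (-1:ℝ) else 1) * ((if j = r then (-1:ℝ) else 1) * wf i j ψ) := by
  simp only [wf, uent_sgn_mul]
  ring

lemma e3w_sgn (i j k r : Fin 4) (ψ : G4) :
    e3w i j k (sgn r * ψ)
      = (if i = r then (-1:ℝ) else 1) * ((if j = r then (-1:ℝ) else 1)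
          * ((if k = r then (-1:ℝ) else 1) * e3w i j k ψ)) := by
  simp only [e3w, uent_sgn_mul]
  ring

def t1v : Fin 4 → Fin 4 := ![0, 0, 0, 1]
def t2v : Fin 4 → Fin 4 := ![1, 1, 2, 2]
def t3v : Fin 4 → Fin 4 := ![2, 3, 3, 3]

lemma sumP (g : Fin 4 × Fin 4 → ℝ) :
    ∑ p ∈ Finset.univ.filter (fun p : Fin 4 × Fin 4 => p.1 < p.2), g p
      = g (0,1) + g (0,2) + g (0,3) + g (1,2) + g (1,3) + g (2,3) := by
  rw [Finset.sum_filter, Fintype.sum_prod_type]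
  simp [Fin.sum_univ_four]
  ring

lemma ee2_expand (b : Fin 4 → ℝ) (ψ : G4) :
    ee2 ((ψ : Matrix (Fin 4) (Fin 4) ℝ) * Matrix.diagonal b)
      = ∑ p ∈ Finset.univ.filter (fun p : Fin 4 × Fin 4 => p.1 < p.2),
          (b p.1 * b p.2) * wf p.1 p.2 ψ := by
  rw [sumP]
  simp only [ee2, w2, wf, Matrix.mul_diagonal, uent]
  ring

lemma e1e3_expand (b : Fin 4 → ℝ) (ψ : G4) :
    ee1 ((ψ : Matrix (Fin 4) (Fin 4) ℝ) * Matrix.diagonal b)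
        * ee3 ((ψ : Matrix (Fin 4) (Fin 4) ℝ) * Matrix.diagonal b)
      = ∑ x : Fin 4 × Fin 4, (b x.1 * (b (t1v x.2) * b (t2v x.2) * b (t3v x.2)))
          * (uent ψ x.1 x.1 * e3w (t1v x.2) (t2v x.2) (t3v x.2) ψ) := by
  rw [Fintype.sum_prod_type]
  simp only [Fin.sum_univ_four, t1v, t2v, t3v, Matrix.cons_val_zero, Matrix.cons_val_one,
    Matrix.head_cons, Matrix.cons_val_two, Matrix.tail_cons, Matrix.cons_val_three,
    ee1, ee3, e3a, e3w, Matrix.mul_diagonal, uent]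
  ring

section MainInt
variable [MeasurableSpace G4] [BorelSpace G4]
variable (ν : Measure G4) [IsProbabilityMeasure ν]

lemma wfwf_int (i j k l : Fin 4) : Integrable (fun ψ => wf i j ψ * wf k l ψ) ν := by
  apply integrable_of_bdd ν ((wf_continuous i j).mul (wf_continuous k l)) (C := 4)
  intro ψ
  simp only [Pi.mul_apply]
  rw [abs_mul]
  have h1 := wf_bound i j ψ
  have h2 := wf_bound k l ψ
  nlinarith [abs_nonneg (wf i j ψ), abs_nonneg (wf k l ψ)]

lemma ue3w_int (a t1 t2 t3 : Fin 4) :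
    Integrable (fun ψ => uent ψ a a * e3w t1 t2 t3 ψ) ν := by
  apply integrable_of_bdd ν ((uent_continuous a a).mul (e3w_continuous t1 t2 t3)) (C := 6)
  intro ψ
  simp only [Pi.mul_apply]
  rw [abs_mul]
  have h1 := uent_bound ψ a a
  have h2 := e3w_bound t1 t2 t3 ψ
  nlinarith [abs_nonneg (uent ψ a a), abs_nonneg (e3w t1 t2 t3 ψ)]

variable (hinv : ∀ U : G4, ν.map (fun V => U * V) = ν)
include hinv

lemma cross_zero (p q : Fin 4 × Fin 4) (hp : p.1 < p.2) (hq : q.1 < q.2) (hpq : p ≠ q) :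
    ∫ ψ, wf p.1 p.2 ψ * wf q.1 q.2 ψ ∂ν = 0 := by
  obtain ⟨r, hr1, hrq1, hrq2⟩ : ∃ r : Fin 4, (r = p.1 ∨ r = p.2) ∧ r ≠ q.1 ∧ r ≠ q.2 := by
    by_cases h1 : p.1 = q.1
    · refine ⟨p.2, Or.inr rfl, ?_, ?_⟩
      · rw [← h1]; exact ne_of_gt hp
      · intro h2; exact hpq (Prod.ext h1 h2)
    · by_cases h2 : p.1 = q.2
      · refine ⟨p.2, Or.inr rfl, ?_, ?_⟩
        · intro h3; rw [h3] at hp; rw [← h2] at hq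
          exact absurd (lt_trans hq hp) (lt_irrefl _)
        · rw [← h2]; exact ne_of_gt hp
      · exact ⟨p.1, Or.inl rfl, h1, h2⟩
  apply integral_zero_of_anti ν hinv (sgn r) _
    ((wf_continuous p.1 p.2).mul (wf_continuous q.1 q.2)).aestronglyMeasurable
  intro ψ
  simp only [Pi.mul_apply]
  rw [wf_sgn, wf_sgn]
  rcases hr1 with rfl | rfl
  · have e1 : (if p.1 = p.1 then (-1:ℝ) else 1) = -1 := if_pos rfl
    have e2 : (if p.2 = p.1 then (-1:ℝ) else 1) = 1 := if_neg (ne_of_gt hp)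
    have e3 : (if q.1 = p.1 then (-1:ℝ) else 1) = 1 := if_neg (fun h => hrq1 h.symm)
    have e4 : (if q.2 = p.1 then (-1:ℝ) else 1) = 1 := if_neg (fun h => hrq2 h.symm)
    rw [e1, e2, e3, e4]; ring
  · have e1 : (if p.1 = p.2 then (-1:ℝ) else 1) = 1 := if_neg (ne_of_lt hp)
    have e2 : (if p.2 = p.2 then (-1:ℝ) else 1) = -1 := if_pos rfl
    have e3 : (if q.1 = p.2 then (-1:ℝ) else 1) = 1 := if_neg (fun h => hrq1 h.symm)
    have e4 : (if q.2 = p.2 then (-1:ℝ) else 1) = 1 := if_neg (fun h => hrq2 h.symm)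
    rw [e1, e2, e3, e4]; ring

lemma diag_sq (i j : Fin 4) (hij : i < j) : ∫ ψ, wf i j ψ * wf i j ψ ∂ν = 1/6 := by
  have hij' : i ≠ j := ne_of_lt hij
  have hj0 : j ≠ 0 := by
    intro h
    rw [h] at hij
    simp [Fin.lt_def] at hij
  set σ : Equiv.Perm (Fin 4) := (Equiv.swap 1 j).trans (Equiv.swap 0 i) with hσ
  have hσ0 : σ 0 = i := by
    rw [hσ]
    simp only [Equiv.trans_apply]
    rw [Equiv.swap_apply_of_ne_of_ne (by decide) (Ne.symm hj0), Equiv.swap_apply_left]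
  have hσ1 : σ 1 = j := by
    rw [hσ]
    simp only [Equiv.trans_apply]
    rw [Equiv.swap_apply_left, Equiv.swap_apply_of_ne_of_ne hj0 (Ne.symm hij')]
  have hcont : Continuous fun ψ : G4 =>
      (uent ψ 0 i * uent ψ 1 j - uent ψ 0 j * uent ψ 1 i)^2 :=
    (((uent_continuous 0 i).mul (uent_continuous 1 j)).sub
      ((uent_continuous 0 j).mul (uent_continuous 1 i))).pow 2
  have hpt : ∀ ψ : G4, (uent (prm σ * ψ) 0 i * uent (prm σ * ψ) 1 j
      - uent (prm σ * ψ) 0 j * uent (prm σ * ψ) 1 i)^2 = wf i j ψ * wf i j ψ := by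
    intro ψ
    simp only [uent_prm_mul, hσ0, hσ1, wf]
    ring
  calc ∫ ψ, wf i j ψ * wf i j ψ ∂ν
      = ∫ ψ, (uent (prm σ * ψ) 0 i * uent (prm σ * ψ) 1 j
          - uent (prm σ * ψ) 0 j * uent (prm σ * ψ) 1 i)^2 ∂ν := by simp only [hpt]
    _ = ∫ ψ, (uent ψ 0 i * uent ψ 1 j - uent ψ 0 j * uent ψ 1 i)^2 ∂ν :=
        intcomp ν hinv (prm σ) _ hcont.aestronglyMeasurable
    _ = 1/6 := sq_moment ν hinv i j hij'

lemma e1e3_zero (a t1 t2 t3 : Fin 4) (hd : t1 ≠ t2 ∧ t1 ≠ t3 ∧ t2 ≠ t3) :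
    ∫ ψ, uent ψ a a * e3w t1 t2 t3 ψ ∂ν = 0 := by
  obtain ⟨r, hrt, hra⟩ : ∃ r : Fin 4, (r = t1 ∨ r = t2 ∨ r = t3) ∧ a ≠ r := by
    by_cases ha : a = t1
    · exact ⟨t2, Or.inr (Or.inl rfl), ha ▸ hd.1⟩
    · exact ⟨t1, Or.inl rfl, ha⟩
  apply integral_zero_of_anti ν hinv (sgn r) _
    ((uent_continuous a a).mul (e3w_continuous t1 t2 t3)).aestronglyMeasurable
  intro ψ
  simp only [Pi.mul_apply]
  rw [uent_sgn_mul, if_neg hra, e3w_sgn]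
  rcases hrt with rfl | rfl | rfl
  · rw [if_pos rfl, if_neg (fun h => hd.1 h.symm), if_neg (fun h => hd.2.1 h.symm)]; ring
  · rw [if_neg hd.1, if_pos rfl, if_neg (fun h => hd.2.2 h.symm)]; ring
  · rw [if_neg hd.2.1, if_neg hd.2.2, if_pos rfl]; ring

end MainInt
end Assembly

/-- for `B = diag(b₁,b₂,b₃,b₄) ∈ GL_4(ℝ)` and the representation
`ρ_{(2,2)}` of `GL_4(ℝ)`, the diagonal matrix coefficient of `ρ_{(2,2)}(B)` at
the normalized `O(4)`-fixed (spherical) vector — which equals the spherical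
function `F_{(2,2)}(B) = ∫_{O(4)} tr ρ_{(2,2)}(ψ B) dψ` with respect to the
normalized Haar (= left-invariant probability) measure — equals
`(Σ_{1 ≤ i < j ≤ 4} b_i² b_j²) / 6`. -/
theorem spherical_coefficient_two_two
    (b : Fin 4 → ℝ) (hb : ∀ i, b i ≠ 0)
    [MeasurableSpace (Matrix.orthogonalGroup (Fin 4) ℝ)]
    [BorelSpace (Matrix.orthogonalGroup (Fin 4) ℝ)]
    (ν : Measure (Matrix.orthogonalGroup (Fin 4) ℝ)) [IsProbabilityMeasure ν]
    (hinv : ∀ U : Matrix.orthogonalGroup (Fin 4) ℝ, ν.map (fun V => U * V) = ν) :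
    ∫ ψ : Matrix.orthogonalGroup (Fin 4) ℝ,
        glChar 4 [2, 2] ((ψ : Matrix (Fin 4) (Fin 4) ℝ) * Matrix.diagonal b) ∂ν
      = (∑ p ∈ Finset.univ.filter (fun p : Fin 4 × Fin 4 => p.1 < p.2),
          (b p.1) ^ 2 * (b p.2) ^ 2) / 6 := by
  classical
  set P := Finset.univ.filter (fun p : Fin 4 × Fin 4 => p.1 < p.2) with hPdef
  have hmemP : ∀ p : Fin 4 × Fin 4, p ∈ P ↔ p.1 < p.2 := by
    intro p; simp [hPdef]
  have hmain : ∀ ψ : Matrix.orthogonalGroup (Fin 4) ℝ,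
      glChar 4 [2,2] ((ψ : Matrix (Fin 4) (Fin 4) ℝ) * Matrix.diagonal b)
      = (∑ x ∈ P ×ˢ P, ((b x.1.1 * b x.1.2) * (b x.2.1 * b x.2.2))
            * (wf x.1.1 x.1.2 ψ * wf x.2.1 x.2.2 ψ))
        - ∑ y : Fin 4 × Fin 4, ((b y.1 * (b (t1v y.2) * b (t2v y.2) * b (t3v y.2)))
            * (uent ψ y.1 y.1 * e3w (t1v y.2) (t2v y.2) (t3v y.2) ψ)) := by
    intro ψ
    rw [glChar22, ee2_expand b ψ, e1e3_expand b ψ, Finset.sum_mul_sum, ← Finset.sum_product']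
    refine congrArg₂ (· - ·) (Finset.sum_congr rfl fun x _ => by ring) rfl
  simp only [hmain]
  have hint1 : Integrable (fun ψ => ∑ x ∈ P ×ˢ P, ((b x.1.1 * b x.1.2) * (b x.2.1 * b x.2.2))
      * (wf x.1.1 x.1.2 ψ * wf x.2.1 x.2.2 ψ)) ν :=
    integrable_finset_sum _ (fun x _ => (wfwf_int ν _ _ _ _).const_mul _)
  have hint2 : Integrable (fun ψ => ∑ y : Fin 4 × Fin 4,
      ((b y.1 * (b (t1v y.2) * b (t2v y.2) * b (t3v y.2)))
        * (uent ψ y.1 y.1 * e3w (t1v y.2) (t2v y.2) (t3v y.2) ψ))) ν :=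
    integrable_finset_sum _ (fun y _ => (ue3w_int ν _ _ _ _).const_mul _)
  rw [integral_sub hint1 hint2,
    integral_finset_sum _ (fun x _ => (wfwf_int ν _ _ _ _).const_mul _),
    integral_finset_sum _ (fun y _ => (ue3w_int ν _ _ _ _).const_mul _)]
  have hzero : ∀ y : Fin 4 × Fin 4,
      ∫ ψ, ((b y.1 * (b (t1v y.2) * b (t2v y.2) * b (t3v y.2)))
        * (uent ψ y.1 y.1 * e3w (t1v y.2) (t2v y.2) (t3v y.2) ψ)) ∂ν = 0 := by
    rintro ⟨a, k⟩
    rw [integral_const_mul]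
    have : ∫ ψ, uent ψ a a * e3w (t1v k) (t2v k) (t3v k) ψ ∂ν = 0 := by
      fin_cases k <;>
        · simp only [t1v, t2v, t3v, Matrix.cons_val_zero, Matrix.cons_val_one, Matrix.head_cons,
            Matrix.cons_val_two, Matrix.tail_cons, Matrix.cons_val_three]
          exact e1e3_zero ν hinv a _ _ _ ⟨by decide, by decide, by decide⟩
    rw [this, mul_zero]
  simp only [hzero, Finset.sum_const_zero, sub_zero]
  have hsq : ∀ x ∈ P ×ˢ P, (∫ ψ, ((b x.1.1 * b x.1.2) * (b x.2.1 * b x.2.2))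
      * (wf x.1.1 x.1.2 ψ * wf x.2.1 x.2.2 ψ) ∂ν)
      = if x.1 = x.2 then ((b x.1.1 * b x.1.2) * (b x.2.1 * b x.2.2)) * (1/6) else 0 := by
    intro x hx
    rw [Finset.mem_product] at hx
    have hx1 := (hmemP x.1).mp hx.1
    have hx2 := (hmemP x.2).mp hx.2
    rw [integral_const_mul]
    by_cases h : x.1 = x.2
    · rw [if_pos h]
      rw [show x.2 = x.1 from h.symm, diag_sq ν hinv x.1.1 x.1.2 hx1]
    · rw [if_neg h, cross_zero ν hinv x.1 x.2 hx1 hx2 h, mul_zero]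
  rw [Finset.sum_congr rfl hsq, Finset.sum_product]
  show (∑ p ∈ P, ∑ q ∈ P, if p = q then b p.1 * b p.2 * (b q.1 * b q.2) * (1/6) else 0)
      = (∑ p ∈ P, b p.1 ^ 2 * b p.2 ^ 2) / 6
  have hdiag : ∀ p ∈ P,
      (∑ q ∈ P, if p = q then b p.1 * b p.2 * (b q.1 * b q.2) * (1/6) else 0)
        = b p.1 ^ 2 * b p.2 ^ 2 * (1/6) := by
    intro p hp
    rw [Finset.sum_ite_eq P p (fun q => b p.1 * b p.2 * (b q.1 * b q.2) * (1/6)), if_pos hp]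
    ring
  rw [Finset.sum_congr rfl hdiag, Finset.sum_div]
  exact Finset.sum_congr rfl fun p _ => by ring
end

section
/- Let A ∈ GL_n(ℝ) and fix a k-dimensional subspace g of ℝ^n together with U₀ ∈ O(n) such that U₀ A g = g. Write B₁ = π_g ∘ (U₀A)|_g and B₂ = π_{g⊥} ∘ (U₀A)|_{g⊥}. Then ∫ det(Id − D L_{V U₀ A}(g)) dV, integrated over V ∈ O(g) × O(g⊥) with normalized Haar measure, equals ∫_{O(k)} ∫_{O(n−k)} det(Id − (ψ₂ B₂) ⊗ ᵀ(ψ₁ B₁)⁻¹) dψ₂ dψ₁, where D L_B(g) is the derivative at g of the action of B on the Grassmannian in the Hom(g,g⊥)-chart, given by φ̇ ↦ (π_{g⊥} B|_{g⊥}) φ̇ (π_g B|_g)⁻¹. -/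
open Matrix MeasureTheory Submodule

noncomputable section

variable {n : ℕ}

/-- `π_g ∘ T|_h : h → g` for a linear map `T` of `ℝⁿ` and subspaces `g, h`. -/
def projRestrict (T : EuclideanSpace ℝ (Fin n) →ₗ[ℝ] EuclideanSpace ℝ (Fin n))
    (g h : Submodule ℝ (EuclideanSpace ℝ (Fin n))) : h →ₗ[ℝ] g :=
  (orthogonalProjection g).toLinearMap ∘ₗ T ∘ₗ h.subtype

/-- The endomorphism of a subspace `g ⊆ ℝⁿ` induced by an orthogonal `k × k`
matrix `ψ` through a linear isometry `e : ℝᵏ ≅ g` (an orthonormal basis). -/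
def orthAct {k : ℕ} (g : Submodule ℝ (EuclideanSpace ℝ (Fin n)))
    (e : EuclideanSpace ℝ (Fin k) ≃ₗᵢ[ℝ] g)
    (ψ : Matrix.orthogonalGroup (Fin k) ℝ) : g →ₗ[ℝ] g :=
  e.toLinearEquiv.toLinearMap ∘ₗ
    Matrix.toEuclideanLin (ψ : Matrix (Fin k) (Fin k) ℝ) ∘ₗ
      e.symm.toLinearEquiv.toLinearMap

section auxkron

variable {R : Type*} [CommRing R] {m p : Type*} [Fintype m] [Fintype p] [DecidableEq m]
  [DecidableEq p]

/-- `X ↦ M * X * N` as a linear endomorphism of matrices. -/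
def lrMul (M : Matrix m m R) (N : Matrix p p R) : Matrix m p R →ₗ[R] Matrix m p R where
  toFun X := M * X * N
  map_add' X Y := by simp [Matrix.mul_add, Matrix.add_mul]
  map_smul' c X := by simp [Matrix.mul_smul, Matrix.smul_mul]

lemma stdBasis_repr' (X : Matrix m p R) (i : m) (j : p) :
    (Matrix.stdBasis R m p).repr X (i, j) = X i j := by
  simp [Matrix.stdBasis]

lemma toMatrix_lrMul (M : Matrix m m R) (N : Matrix p p R) :
    LinearMap.toMatrix (Matrix.stdBasis R m p) (Matrix.stdBasis R m p) (lrMul M N)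
      = Matrix.kroneckerMap (· * ·) M Nᵀ := by
  ext ⟨i, j⟩ ⟨i', j'⟩
  rw [LinearMap.toMatrix_apply, Matrix.stdBasis_eq_single, stdBasis_repr']
  simp [lrMul, Matrix.mul_apply, Matrix.single, Finset.sum_ite_eq, ite_and,
    Finset.mul_sum, Finset.sum_mul, mul_comm]

lemma det_one_sub_lrMul (M : Matrix m m R) (N : Matrix p p R) :
    LinearMap.det (LinearMap.id - lrMul M N)
      = ((1 : Matrix (m × p) (m × p) R) - Matrix.kroneckerMap (· * ·) M Nᵀ).det := by
  rw [← LinearMap.det_toMatrix (Matrix.stdBasis R m p), map_sub, LinearMap.toMatrix_id,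
    toMatrix_lrMul]

end auxkron

section auxonb

lemma toMatrix_map_inner {E F : Type*} [NormedAddCommGroup E] [InnerProductSpace ℝ E]
    [NormedAddCommGroup F] [InnerProductSpace ℝ F] {k l : ℕ}
    (e : EuclideanSpace ℝ (Fin k) ≃ₗᵢ[ℝ] E) (f : EuclideanSpace ℝ (Fin l) ≃ₗᵢ[ℝ] F)
    (S : E →ₗ[ℝ] F) (i : Fin l) (j : Fin k) :
    LinearMap.toMatrix ((EuclideanSpace.basisFun (Fin k) ℝ).map e).toBasis
      ((EuclideanSpace.basisFun (Fin l) ℝ).map f).toBasis S i j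
      = inner (𝕜 := ℝ) (f (EuclideanSpace.single i 1)) (S (e (EuclideanSpace.single j 1))) := by
  rw [LinearMap.toMatrix_apply, OrthonormalBasis.coe_toBasis_repr_apply,
    OrthonormalBasis.repr_apply_apply]
  simp [OrthonormalBasis.map_apply, EuclideanSpace.basisFun_apply]

lemma toMatrix_orthAct {k : ℕ} (g : Submodule ℝ (EuclideanSpace ℝ (Fin n)))
    (e : EuclideanSpace ℝ (Fin k) ≃ₗᵢ[ℝ] g) (ψ : Matrix.orthogonalGroup (Fin k) ℝ) :
    LinearMap.toMatrix ((EuclideanSpace.basisFun (Fin k) ℝ).map e).toBasis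
      ((EuclideanSpace.basisFun (Fin k) ℝ).map e).toBasis (orthAct g e ψ)
      = (ψ : Matrix (Fin k) (Fin k) ℝ) := by
  ext i j
  rw [toMatrix_map_inner]
  simp only [orthAct, LinearMap.comp_apply, LinearEquiv.coe_coe,
    LinearIsometryEquiv.coe_toLinearEquiv, LinearIsometryEquiv.symm_apply_apply,
    LinearIsometryEquiv.inner_map_map]
  rw [EuclideanSpace.inner_single_left]
  show (starRingEnd ℝ) 1 * ((ψ : Matrix (Fin k) (Fin k) ℝ) *ᵥ
    (WithLp.equiv 2 _) (EuclideanSpace.single j (1:ℝ))) i = (ψ : Matrix (Fin k) (Fin k) ℝ) i j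
  rw [WithLp.equiv_apply, PiLp.ofLp_single, Matrix.mulVec_single]
  simp

end auxonb

/-- with `B₁ = π_g ∘ (U₀A)|_g`, `B₂ = π_{g⊥} ∘ (U₀A)|_{g⊥}` (where
`U₀ ∈ O(n)`, `U₀ A g = g`), the integral over `V ∈ O(g) × O(g⊥)` (normalized Haar
measures) of `det (Id - D L_{V U₀ A}(g))` — where `D L_B(g) : φ̇ ↦
(π_{g⊥} B|_{g⊥}) φ̇ (π_g B|_g)⁻¹` is the derivative of the Grassmannian action in
the `Hom(g, g⊥)` chart — equals
`∫_{O(k)} ∫_{O(n-k)} det (Id - (ψ₂ B₂) ⊗ ᵀ(ψ₁ B₁)⁻¹) dψ₂ dψ₁`, where `B₁, B₂`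
are expressed as matrices in orthonormal bases of `g, g⊥` and `M ⊗ ᵀN` is the
Kronecker-product endomorphism `X ↦ M X N⁻¹`. -/
theorem integral_det_derivative_eq_integral_det_kronecker
    (k : ℕ) (hkn : k ≤ n)
    (A : Matrix (Fin n) (Fin n) ℝ) (hA : IsUnit A.det)
    (U₀ : Matrix.orthogonalGroup (Fin n) ℝ)
    (g : Submodule ℝ (EuclideanSpace ℝ (Fin n)))
    (hg : Submodule.map (Matrix.toEuclideanLin ((U₀ : Matrix (Fin n) (Fin n) ℝ) * A)) g = g)
    (hgk : Module.finrank ℝ g = k)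
    (e₁ : EuclideanSpace ℝ (Fin k) ≃ₗᵢ[ℝ] g)
    (e₂ : EuclideanSpace ℝ (Fin (n - k)) ≃ₗᵢ[ℝ]
      (gᗮ : Submodule ℝ (EuclideanSpace ℝ (Fin n))))
    -- the matrices of `B₁` and `B₂` in the orthonormal bases `e₁`, `e₂`:
    (B₁m : Matrix (Fin k) (Fin k) ℝ)
    (hB₁m : ∀ i j, B₁m i j = inner (𝕜 := ℝ)
      (e₁ (EuclideanSpace.single i 1))
      (projRestrict (Matrix.toEuclideanLin ((U₀ : Matrix (Fin n) (Fin n) ℝ) * A)) g g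
        (e₁ (EuclideanSpace.single j 1))))
    (B₂m : Matrix (Fin (n - k)) (Fin (n - k)) ℝ)
    (hB₂m : ∀ i j, B₂m i j = inner (𝕜 := ℝ)
      (e₂ (EuclideanSpace.single i 1))
      (projRestrict (Matrix.toEuclideanLin ((U₀ : Matrix (Fin n) (Fin n) ℝ) * A)) gᗮ gᗮ
        (e₂ (EuclideanSpace.single j 1))))
    -- `L ψ₁ ψ₂` is the derivative `D L_{V U₀ A}(g)` for `V = (ψ₁, ψ₂) ∈ O(g) × O(g⊥)`:
    (L : Matrix.orthogonalGroup (Fin k) ℝ → Matrix.orthogonalGroup (Fin (n - k)) ℝ →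
      ((g →ₗ[ℝ] (gᗮ : Submodule ℝ (EuclideanSpace ℝ (Fin n)))) →ₗ[ℝ]
        (g →ₗ[ℝ] (gᗮ : Submodule ℝ (EuclideanSpace ℝ (Fin n))))))
    (hL : ∀ ψ₁ ψ₂ X,
      (L ψ₁ ψ₂ X) ∘ₗ (orthAct g e₁ ψ₁ ∘ₗ
          projRestrict (Matrix.toEuclideanLin ((U₀ : Matrix (Fin n) (Fin n) ℝ) * A)) g g)
        = (orthAct gᗮ e₂ ψ₂ ∘ₗ
            projRestrict (Matrix.toEuclideanLin ((U₀ : Matrix (Fin n) (Fin n) ℝ) * A)) gᗮ gᗮ)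
          ∘ₗ X)
    -- normalized Haar measures on `O(k)` and `O(n-k)`:
    [MeasurableSpace (Matrix.orthogonalGroup (Fin k) ℝ)]
    [BorelSpace (Matrix.orthogonalGroup (Fin k) ℝ)]
    (ν₁ : Measure (Matrix.orthogonalGroup (Fin k) ℝ)) [IsProbabilityMeasure ν₁]
    (hinv₁ : ∀ U : Matrix.orthogonalGroup (Fin k) ℝ, ν₁.map (fun V => U * V) = ν₁)
    [MeasurableSpace (Matrix.orthogonalGroup (Fin (n - k)) ℝ)]
    [BorelSpace (Matrix.orthogonalGroup (Fin (n - k)) ℝ)]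
    (ν₂ : Measure (Matrix.orthogonalGroup (Fin (n - k)) ℝ)) [IsProbabilityMeasure ν₂]
    (hinv₂ : ∀ U : Matrix.orthogonalGroup (Fin (n - k)) ℝ, ν₂.map (fun V => U * V) = ν₂) :
    (∫ ψ₁ : Matrix.orthogonalGroup (Fin k) ℝ,
        ∫ ψ₂ : Matrix.orthogonalGroup (Fin (n - k)) ℝ,
          LinearMap.det (LinearMap.id - L ψ₁ ψ₂) ∂ν₂ ∂ν₁)
      = ∫ ψ₁ : Matrix.orthogonalGroup (Fin k) ℝ,
          ∫ ψ₂ : Matrix.orthogonalGroup (Fin (n - k)) ℝ,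
            ((1 : Matrix ((Fin (n - k)) × Fin k) ((Fin (n - k)) × Fin k) ℝ)
              - Matrix.kroneckerMap (· * ·)
                  ((ψ₂ : Matrix (Fin (n - k)) (Fin (n - k)) ℝ) * B₂m)
                  ((((ψ₁ : Matrix (Fin k) (Fin k) ℝ) * B₁m)⁻¹)ᵀ)).det ∂ν₂ ∂ν₁ := by
  classical
  set Tm : Matrix (Fin n) (Fin n) ℝ := (U₀ : Matrix (Fin n) (Fin n) ℝ) * A with hTmdef
  set T : EuclideanSpace ℝ (Fin n) →ₗ[ℝ] EuclideanSpace ℝ (Fin n) :=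
    Matrix.toEuclideanLin Tm with hTdef
  -- `Tm` is invertible
  have hU₀ : IsUnit (U₀ : Matrix (Fin n) (Fin n) ℝ) := ⟨Unitary.toUnits U₀, rfl⟩
  have hdet : IsUnit Tm.det := by
    rw [hTmdef, Matrix.det_mul]
    exact (hU₀.map (Matrix.detMonoidHom)).mul hA
  have hTinj : Function.Injective T := by
    rw [hTdef, Matrix.toEuclideanLin_eq_toLin]
    exact (Matrix.toLinearEquiv (PiLp.basisFun 2 ℝ (Fin n)) Tm hdet).injective
  -- `B₁` is bijective on `g`
  have hTg : ∀ x : g, T (x : EuclideanSpace ℝ (Fin n)) ∈ g := fun x => by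
    have hx := Submodule.mem_map_of_mem (f := T) x.2
    rwa [hg] at hx
  have hB₁coe : ∀ x : g,
      ((projRestrict T g g x : g) : EuclideanSpace ℝ (Fin n)) = T (x : EuclideanSpace ℝ (Fin n)) :=
    fun x => by
      simp only [projRestrict, LinearMap.comp_apply, Submodule.subtype_apply,
        ContinuousLinearMap.coe_coe]
      exact Submodule.starProjection_eq_self_iff.mpr (hTg x)
  have hB₁bij : Function.Bijective (projRestrict T g g) := by
    constructor
    · intro x y hxy
      apply Subtype.ext
      apply hTinj
      rw [← hB₁coe, ← hB₁coe, hxy]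
    · intro y
      have hy : (y : EuclideanSpace ℝ (Fin n)) ∈ Submodule.map T g := by rw [hg]; exact y.2
      obtain ⟨x, hx, hTx⟩ := hy
      exact ⟨⟨x, hx⟩, Subtype.ext (by rw [hB₁coe]; exact hTx)⟩
  have hB₁det : IsUnit (LinearMap.det (projRestrict T g g)) := by
    have : ((LinearEquiv.ofBijective (projRestrict T g g) hB₁bij) : g →ₗ[ℝ] g)
        = projRestrict T g g := rfl
    rw [← this]
    exact LinearEquiv.isUnit_det' _
  -- bases
  set b₁ : Module.Basis (Fin k) ℝ g := ((EuclideanSpace.basisFun (Fin k) ℝ).map e₁).toBasis with hb₁def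
  set b₂ : Module.Basis (Fin (n - k)) ℝ (gᗮ : Submodule ℝ (EuclideanSpace ℝ (Fin n))) :=
    ((EuclideanSpace.basisFun (Fin (n - k)) ℝ).map e₂).toBasis with hb₂def
  have hb1 : LinearMap.toMatrix b₁ b₁ (projRestrict T g g) = B₁m := by
    ext i j; rw [hb₁def, toMatrix_map_inner, hB₁m]
  have hb2 : LinearMap.toMatrix b₂ b₂ (projRestrict T gᗮ gᗮ) = B₂m := by
    ext i j; rw [hb₂def, toMatrix_map_inner, hB₂m]
  -- pointwise identity of the integrands
  have key : ∀ (ψ₁ : Matrix.orthogonalGroup (Fin k) ℝ)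
      (ψ₂ : Matrix.orthogonalGroup (Fin (n - k)) ℝ),
      LinearMap.det (LinearMap.id - L ψ₁ ψ₂)
        = ((1 : Matrix ((Fin (n - k)) × Fin k) ((Fin (n - k)) × Fin k) ℝ)
            - Matrix.kroneckerMap (· * ·)
                ((ψ₂ : Matrix (Fin (n - k)) (Fin (n - k)) ℝ) * B₂m)
                ((((ψ₁ : Matrix (Fin k) (Fin k) ℝ) * B₁m)⁻¹)ᵀ)).det := by
    intro ψ₁ ψ₂
    set Mm : Matrix (Fin (n - k)) (Fin (n - k)) ℝ :=
      (ψ₂ : Matrix (Fin (n - k)) (Fin (n - k)) ℝ) * B₂m with hMmdef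
    set Nm : Matrix (Fin k) (Fin k) ℝ := (ψ₁ : Matrix (Fin k) (Fin k) ℝ) * B₁m with hNmdef
    have hNdet : IsUnit Nm.det := by
      rw [hNmdef, Matrix.det_mul]
      refine IsUnit.mul ?_ ?_
      · exact IsUnit.map Matrix.detMonoidHom ⟨Unitary.toUnits ψ₁, rfl⟩
      · rw [← hb1, LinearMap.det_toMatrix]; exact hB₁det
    have hcomp1 : LinearMap.toMatrix b₁ b₁ (orthAct g e₁ ψ₁ ∘ₗ projRestrict T g g) = Nm := by
      rw [LinearMap.toMatrix_comp b₁ b₁ b₁, hb1, hb₁def, toMatrix_orthAct]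
    have hcomp2 : LinearMap.toMatrix b₂ b₂ (orthAct gᗮ e₂ ψ₂ ∘ₗ projRestrict T gᗮ gᗮ) = Mm := by
      rw [LinearMap.toMatrix_comp b₂ b₂ b₂, hb2, hb₂def, toMatrix_orthAct]
    have hLX : ∀ X, LinearMap.toMatrix b₁ b₂ (L ψ₁ ψ₂ X)
        = Mm * LinearMap.toMatrix b₁ b₂ X * Nm⁻¹ := by
      intro X
      have h := congrArg (LinearMap.toMatrix b₁ b₂) (hL ψ₁ ψ₂ X)
      rw [LinearMap.toMatrix_comp b₁ b₁ b₂, LinearMap.toMatrix_comp b₁ b₂ b₂, hcomp1, hcomp2] at h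
      rw [← h, Matrix.mul_nonsing_inv_cancel_right _ _ hNdet]
    set Φ := LinearMap.toMatrix b₁ b₂ with hΦdef
    have hLeq : LinearMap.id - L ψ₁ ψ₂
        = (Φ.symm : Matrix (Fin (n - k)) (Fin k) ℝ →ₗ[ℝ] _) ∘ₗ
            (LinearMap.id - lrMul Mm Nm⁻¹) ∘ₗ
              (Φ.symm.symm : _ →ₗ[ℝ] Matrix (Fin (n - k)) (Fin k) ℝ) := by
      apply LinearMap.ext; intro X
      have hX : L ψ₁ ψ₂ X = Φ.symm (Mm * Φ X * Nm⁻¹) := by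
        rw [← hLX X]; exact (Φ.symm_apply_apply _).symm
      simp only [LinearMap.sub_apply, LinearMap.id_apply, LinearMap.comp_apply,
        LinearEquiv.coe_coe, map_sub, lrMul, LinearEquiv.symm_symm, LinearMap.coe_mk,
        AddHom.coe_mk]
      rw [hX, Φ.symm_apply_apply]
    rw [hLeq, LinearMap.det_conj, det_one_sub_lrMul]
  refine integral_congr_ae (Filter.Eventually.of_forall fun ψ₁ => ?_)
  refine integral_congr_ae (Filter.Eventually.of_forall fun ψ₂ => ?_)
  exact key ψ₁ ψ₂

end
end
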